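/- Let f ∈ ℂ[X₀,X₁] be homogeneous of degree d ≥ 4 and squarefree, and let F = Y^d − f(X₀,X₁) ∈ ℂ[Y,X₀,X₁]. If P ∈ ℂ[Y,X₀,X₁] is homogeneous of degree d−4 and satisfies u·P ∈ J_F for every homogeneous u ∈ ℂ[X₀,X₁] of degree d, then P = 0. -/

import Mathlib

open MvPolynomial

/-- The Jacobian ideal of a binary form `f ∈ ℂ[X₀,X₁] = S`: the ideal generated by the two
partial derivatives of `f`. -/
noncomputable def jacIdealS (f : MvPolynomial (Fin 2) ℂ) : Ideal (MvPolynomial (Fin 2) ℂ) :=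
  Ideal.span {pderiv 0 f, pderiv 1 f}

/-- The inclusion `S = ℂ[X₀,X₁] → T = ℂ[Y,X₀,X₁]`, where the variable `Y` of `T` is indexed
by `0` and `X₀, X₁` by `1, 2`. -/
noncomputable def embS : MvPolynomial (Fin 2) ℂ →ₐ[ℂ] MvPolynomial (Fin 3) ℂ :=
  rename Fin.succ

/-- `F = Y^d − f(X₀,X₁) ∈ T = ℂ[Y,X₀,X₁]`. -/
noncomputable def bigF (d : ℕ) (f : MvPolynomial (Fin 2) ℂ) : MvPolynomial (Fin 3) ℂ :=
  X 0 ^ d - embS f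

/-- The Jacobian ideal `J_F ⊆ T` of `F = Y^d − f`: the ideal generated by the three partial
derivatives `∂F/∂Y = d·Y^{d−1}`, `∂F/∂X₀ = −∂f/∂X₀`, `∂F/∂X₁ = −∂f/∂X₁`. -/
noncomputable def jacIdealT (d : ℕ) (f : MvPolynomial (Fin 2) ℂ) :
    Ideal (MvPolynomial (Fin 3) ℂ) :=
  Ideal.span {pderiv 0 (bigF d f), pderiv 1 (bigF d f), pderiv 2 (bigF d f)}

namespace Stmt12Aux

open Finsupp

local notation "S" => MvPolynomial (Fin 2) ℂ

lemma wt_eq (m : Fin 2 →₀ ℕ) : weight (1 : Fin 2 → ℕ) m = m 0 + m 1 := by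
  rw [weight_apply, Finsupp.sum_fintype]
  · simp [Fin.sum_univ_two]
  · intro i; simp

lemma coeff_pderiv' {σ : Type*} [DecidableEq σ] (i : σ) (f : MvPolynomial σ ℂ) (m : σ →₀ ℕ) :
    coeff m (pderiv i f) = (m i + 1 : ℂ) * coeff (m + Finsupp.single i 1) f := by
  induction f using MvPolynomial.induction_on' with
  | add p q hp hq => simp [hp, hq, mul_add]
  | monomial s a =>
    rw [pderiv_monomial, coeff_monomial, coeff_monomial]
    split_ifs with h1 h2 h2
    · have : s i = m i + 1 := by
        rw [h2, Finsupp.add_apply, Finsupp.single_apply, if_pos rfl]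
      rw [this]; push_cast; ring
    · rcases Nat.eq_zero_or_pos (s i) with h0 | h0
      · rw [h0]; push_cast; rw [mul_zero, mul_zero]
      · exfalso; apply h2
        ext j
        have h1j := DFunLike.congr_fun h1 j
        rw [Finsupp.tsub_apply, Finsupp.single_apply] at h1j
        rw [Finsupp.add_apply, Finsupp.single_apply]
        by_cases hj : i = j
        · subst hj; rw [if_pos rfl] at h1j ⊢; omega
        · rw [if_neg hj] at h1j ⊢; omega
    · exfalso; apply h1; rw [h2, add_tsub_cancel_right]
    · rw [mul_zero]

lemma pderiv_isHomogeneous {f : MvPolynomial (Fin 2) ℂ} {n : ℕ} (i : Fin 2)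
    (hf : f.IsHomogeneous n) : (pderiv i f).IsHomogeneous (n - 1) := by
  intro m hm
  rw [coeff_pderiv'] at hm
  have h2 : coeff (m + Finsupp.single i 1) f ≠ 0 := right_ne_zero_of_mul hm
  have := hf h2
  rw [map_add] at this
  have hs : weight (1 : Fin 2 → ℕ) (Finsupp.single i 1) = 1 := by
    rw [weight_apply, Finsupp.sum_single_index] <;> simp
  omega

lemma X_mul_pderiv_monomial {i : Fin 2} (m : Fin 2 →₀ ℕ) (c : ℂ) :
    X i * pderiv i (monomial m c) = monomial m (c * (m i : ℂ)) := by
  have hX : (X i : MvPolynomial (Fin 2) ℂ) = monomial (Finsupp.single i 1) 1 := by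
    rw [← C_mul_X_eq_monomial, map_one, one_mul]
  rw [pderiv_monomial, hX, monomial_mul, one_mul]
  rcases Nat.eq_zero_or_pos (m i) with h0 | h0
  · rw [h0]; simp
  · have hm : Finsupp.single i 1 + (m - Finsupp.single i 1) = m := by
      ext j
      rw [Finsupp.add_apply, Finsupp.tsub_apply, Finsupp.single_apply]
      by_cases hj : i = j
      · subst hj; rw [if_pos rfl]; omega
      · rw [if_neg hj]; omega
    rw [hm]

lemma euler {f : MvPolynomial (Fin 2) ℂ} {n : ℕ} (hf : f.IsHomogeneous n) :
    X 0 * pderiv 0 f + X 1 * pderiv 1 f = C (n : ℂ) * f := by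
  conv_lhs => rw [← f.support_sum_monomial_coeff]
  conv_rhs => rw [← f.support_sum_monomial_coeff]
  rw [map_sum (pderiv 0), map_sum (pderiv 1), Finset.mul_sum, Finset.mul_sum, Finset.mul_sum,
    ← Finset.sum_add_distrib]
  apply Finset.sum_congr rfl
  intro m hm
  rw [X_mul_pderiv_monomial, X_mul_pderiv_monomial, ← map_add, ← mul_add, C_mul_monomial]
  congr 1
  have hc : coeff m f ≠ 0 := MvPolynomial.mem_support_iff.mp hm
  have := hf hc
  rw [wt_eq] at this
  rw [← this]
  push_cast; ring


lemma prime_X_fin2 (i : Fin 2) : Prime (X i : MvPolynomial (Fin 2) ℂ) := by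
  let κ := (renameEquiv ℂ (Equiv.swap i 0)).trans (finSuccEquiv ℂ 1)
  have hκ : κ (X i) = Polynomial.X := by
    show (finSuccEquiv ℂ 1) ((renameEquiv ℂ (Equiv.swap i 0)) (X i)) = Polynomial.X
    rw [renameEquiv_apply, rename_X, Equiv.swap_apply_left, finSuccEquiv_X_zero]
  rw [← MulEquiv.prime_iff κ.toMulEquiv]
  have h2 : κ.toMulEquiv (X i) = Polynomial.X := hκ
  rw [h2]
  exact Polynomial.prime_X

lemma finSuccEquiv_pderiv_zero (p : MvPolynomial (Fin 2) ℂ) :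
    finSuccEquiv ℂ 1 (pderiv 0 p) = Polynomial.derivative (finSuccEquiv ℂ 1 p) := by
  induction p using MvPolynomial.induction_on with
  | C a => simp [finSuccEquiv_apply]
  | add p q hp hq => simp [hp, hq]
  | mul_X p i hp =>
    have hXi : (finSuccEquiv ℂ 1) (pderiv 0 (X i)) =
        Polynomial.derivative ((finSuccEquiv ℂ 1) (X i)) := by
      refine Fin.cases ?_ ?_ i
      · rw [pderiv_X_self, finSuccEquiv_X_zero, Polynomial.derivative_X, map_one]
      · intro j
        rw [pderiv_X_of_ne (Fin.succ_ne_zero j), finSuccEquiv_X_succ,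
          Polynomial.derivative_C, map_zero]
    rw [pderiv_mul, map_add, map_mul, map_mul, map_mul, Polynomial.derivative_mul, hp, hXi]

lemma not_dvd_pderiv_zero {q : MvPolynomial (Fin 2) ℂ} (hne : pderiv 0 q ≠ 0) :
    ¬ q ∣ pderiv 0 q := by
  intro hdvd
  set φ := finSuccEquiv ℂ 1
  have hdvd' : φ q ∣ Polynomial.derivative (φ q) := by
    rw [← finSuccEquiv_pderiv_zero]
    obtain ⟨c, hc⟩ := hdvd
    exact ⟨φ c, by rw [hc, map_mul]⟩
  have hne' : Polynomial.derivative (φ q) ≠ 0 := by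
    rw [← finSuccEquiv_pderiv_zero]
    simpa [φ] using hne
  have h1 := Polynomial.natDegree_le_of_dvd hdvd' hne'
  have hd0 : (φ q).natDegree ≠ 0 := by
    intro h
    rw [Polynomial.eq_C_of_natDegree_eq_zero h, Polynomial.derivative_C] at hne'
    exact hne' rfl
  exact absurd (Polynomial.natDegree_derivative_lt hd0) (by omega)

lemma not_dvd_pderiv {q : MvPolynomial (Fin 2) ℂ} (i : Fin 2) (hne : pderiv i q ≠ 0) :
    ¬ q ∣ pderiv i q := by
  intro hdvd
  set e := Equiv.swap (0 : Fin 2) i with he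
  set q' := rename (⇑e) q with hq'
  have hqq : rename (⇑e) q' = q := by
    rw [hq', rename_rename]
    have : (⇑e) ∘ (⇑e) = id := by
      funext x; exact Equiv.swap_apply_self _ _ x
    rw [this, rename_id, AlgHom.id_apply]
  have key : pderiv i q = rename (⇑e) (pderiv 0 q') := by
    have h3 : pderiv (e 0) (rename (⇑e) q') = rename (⇑e) (pderiv 0 q') :=
      pderiv_rename e.injective 0 q'
    rw [Equiv.swap_apply_left, hqq] at h3
    exact h3
  have h0' : pderiv 0 q' ≠ 0 := by
    intro h
    rw [key, h, map_zero] at hne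
    exact hne rfl
  apply not_dvd_pderiv_zero h0'
  have hdvd2 : (renameEquiv ℂ e) q' ∣ (renameEquiv ℂ e) (pderiv 0 q') := by
    rw [renameEquiv_apply, renameEquiv_apply, hqq, ← key]
    exact hdvd
  obtain ⟨c, hc⟩ := hdvd2
  refine ⟨(renameEquiv ℂ e).symm c, ?_⟩
  have hc2 := congrArg ⇑(renameEquiv ℂ e).symm hc
  rw [map_mul] at hc2
  simpa using hc2

lemma exp_zero_of_pderiv_eq_zero {q : MvPolynomial (Fin 2) ℂ} {i : Fin 2}
    (h : pderiv i q = 0) {m : Fin 2 →₀ ℕ} (hm : m ∈ q.support) : m i = 0 := by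
  by_contra h0
  set m' : Fin 2 →₀ ℕ := m - Finsupp.single i 1 with hm'def
  have key := coeff_pderiv' i q m'
  rw [h, coeff_zero] at key
  have hm' : m' + Finsupp.single i 1 = m := by
    ext j
    rw [hm'def, Finsupp.add_apply, Finsupp.tsub_apply, Finsupp.single_apply]
    by_cases hj : i = j
    · subst hj; rw [if_pos rfl]; omega
    · rw [if_neg hj]; omega
  rw [hm'] at key
  have h1 : ((m' i : ℕ) + 1 : ℂ) ≠ 0 := Nat.cast_add_one_ne_zero _
  have h2 : coeff m q ≠ 0 := MvPolynomial.mem_support_iff.mp hm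
  exact mul_ne_zero h1 h2 key.symm

lemma eq_C_of_support {q : MvPolynomial (Fin 2) ℂ}
    (h : ∀ m ∈ q.support, m = 0) : q = C (coeff 0 q) := by
  ext m'
  by_cases hm : m' = 0
  · subst hm; rw [coeff_C]; simp
  · rw [coeff_C, if_neg (fun hh => hm hh.symm)]
    by_contra hc
    exact hm (h m' (MvPolynomial.mem_support_iff.mpr fun h2 => hc h2))

lemma dvd_of_dvd_pderivs {f p : MvPolynomial (Fin 2) ℂ} {d : ℕ} (hd : d ≠ 0)
    (hf : f.IsHomogeneous d) (h0 : p ∣ pderiv 0 f) (h1 : p ∣ pderiv 1 f) : p ∣ f := by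
  have he := euler hf
  have hdvd : p ∣ C (d : ℂ) * f := by
    rw [← he]
    exact dvd_add (Dvd.dvd.mul_left h0 _) (Dvd.dvd.mul_left h1 _)
  have hu : IsUnit (C (d : ℂ) : MvPolynomial (Fin 2) ℂ) := by
    apply IsUnit.map
    exact isUnit_iff_ne_zero.mpr (Nat.cast_ne_zero.mpr hd)
  rwa [hu.dvd_mul_left] at hdvd

lemma relPrime_pderivs {f : MvPolynomial (Fin 2) ℂ} {d : ℕ} (hd : 2 ≤ d)
    (hf : f.IsHomogeneous d) (hsf : Squarefree f) :
    IsRelPrime (pderiv 0 f) (pderiv 1 f) := by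
  intro p hp0 hp1
  by_contra hpu
  have hf0 : f ≠ 0 := hsf.ne_zero
  have hp_ne : p ≠ 0 := by
    rintro rfl
    rw [zero_dvd_iff] at hp0 hp1
    have he := euler hf
    rw [hp0, hp1, mul_zero, mul_zero, zero_add] at he
    have : f = 0 := by
      have hu : (C (d : ℂ) : MvPolynomial (Fin 2) ℂ) ≠ 0 := by
        simp only [ne_eq, MvPolynomial.C_eq_zero]
        exact Nat.cast_ne_zero.mpr (by omega)
      exact (mul_eq_zero.mp he.symm).resolve_left hu
    exact hf0 this
  obtain ⟨q, hqirr, hq_dvd⟩ := WfDvdMonoid.exists_irreducible_factor hpu hp_ne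
  have hq : Prime q := (UniqueFactorizationMonoid.irreducible_iff_prime).mp hqirr
  have hq0 : q ∣ pderiv 0 f := hq_dvd.trans hp0
  have hq1 : q ∣ pderiv 1 f := hq_dvd.trans hp1
  have hqf : q ∣ f := dvd_of_dvd_pderivs (by omega) hf hq0 hq1
  obtain ⟨g, hg⟩ := hqf
  have key : ∀ i : Fin 2, q ∣ pderiv i f → q ∣ g ∨ pderiv i q = 0 := by
    intro i hi
    rw [hg, pderiv_mul] at hi
    have h2 : q ∣ pderiv i q * g := by
      have h3 := dvd_sub hi (dvd_mul_right q (pderiv i g))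
      simpa using h3
    rcases hq.2.2 _ _ h2 with hA | hB
    · by_cases hz : pderiv i q = 0
      · exact Or.inr hz
      · exact absurd hA (not_dvd_pderiv i hz)
    · exact Or.inl hB
  have hnot_g : ¬ q ∣ g := by
    intro hqg
    obtain ⟨g', hg'⟩ := hqg
    apply hq.not_unit
    apply hsf q
    rw [hg, hg', ← mul_assoc]
    exact Dvd.intro _ rfl
  have hq0' : pderiv 0 q = 0 := (key 0 hq0).resolve_left hnot_g
  have hq1' : pderiv 1 q = 0 := (key 1 hq1).resolve_left hnot_g
  have hsupp : ∀ m ∈ q.support, m = 0 := by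
    intro m hm
    ext j
    refine Fin.cases ?_ ?_ j
    · exact exp_zero_of_pderiv_eq_zero hq0' hm
    · intro jj
      have hjj : jj = 0 := Subsingleton.elim _ _
      subst hjj
      have h1 : ((0 : Fin 1).succ : Fin 2) = 1 := rfl
      rw [h1]
      exact exp_zero_of_pderiv_eq_zero hq1' hm
  have := eq_C_of_support hsupp
  rcases eq_or_ne (coeff 0 q) 0 with hc | hc
  · rw [hc, map_zero] at this
    exact hq.ne_zero this
  · apply hq.not_unit
    rw [this]
    exact (isUnit_iff_ne_zero.mpr hc).map C


lemma HC_mul {u g : MvPolynomial (Fin 2) ℂ} {r n : ℕ} (hg : g.IsHomogeneous r) :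
    homogeneousComponent n (u * g) =
      if r ≤ n then homogeneousComponent (n - r) u * g else 0 := by
  conv_lhs => rw [← u.sum_homogeneousComponent, Finset.sum_mul, map_sum]
  have hterm : ∀ j, homogeneousComponent n (homogeneousComponent j u * g) =
      if n = j + r then homogeneousComponent j u * g else 0 := by
    intro j
    exact homogeneousComponent_of_mem
      ((mem_homogeneousSubmodule _ _).mpr ((homogeneousComponent_isHomogeneous j u).mul hg))
  rw [Finset.sum_congr rfl (fun j _ => hterm j)]
  split_ifs with hrn
  · have hcond : ∀ j, (if n = j + r then homogeneousComponent j u * g else 0)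
        = (if j = n - r then homogeneousComponent j u * g else 0) := by
      intro j
      by_cases hj : j = n - r
      · rw [if_pos (by omega), if_pos hj]
      · rw [if_neg (by omega), if_neg hj]
    rw [Finset.sum_congr rfl (fun j _ => hcond j)]
    rw [Finset.sum_ite_eq' (Finset.range (u.totalDegree + 1))
      (n - r) (fun j => homogeneousComponent j u * g)]
    split_ifs with hmem
    · rfl
    · rw [Finset.mem_range, not_lt] at hmem
      rw [homogeneousComponent_eq_zero, zero_mul]
      omega
  · apply Finset.sum_eq_zero
    intro j _
    rw [if_neg]
    omega

lemma hom_eq_self {h : MvPolynomial (Fin 2) ℂ} {n : ℕ} (hh : h.IsHomogeneous n) :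
    homogeneousComponent n h = h := by
  rw [homogeneousComponent_of_mem ((mem_homogeneousSubmodule _ _).mpr hh), if_pos rfl]

lemma hom_rep_lt {f₀ f₁ h : MvPolynomial (Fin 2) ℂ} {D n : ℕ}
    (hf₀ : f₀.IsHomogeneous D) (hf₁ : f₁.IsHomogeneous D) (hh : h.IsHomogeneous n)
    (hmem : h ∈ Ideal.span {f₀, f₁}) (hlt : n < D) : h = 0 := by
  obtain ⟨u, v, huv⟩ := Ideal.mem_span_pair.mp hmem
  have : h = homogeneousComponent n (u * f₀) + homogeneousComponent n (v * f₁) := by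
    rw [← map_add, huv, hom_eq_self hh]
  rw [HC_mul hf₀, HC_mul hf₁, if_neg (by omega), if_neg (by omega), add_zero] at this
  exact this

lemma hom_rep {f₀ f₁ h : MvPolynomial (Fin 2) ℂ} {D n : ℕ}
    (hf₀ : f₀.IsHomogeneous D) (hf₁ : f₁.IsHomogeneous D) (hh : h.IsHomogeneous n)
    (hmem : h ∈ Ideal.span {f₀, f₁}) (hle : D ≤ n) :
    ∃ a b : MvPolynomial (Fin 2) ℂ, a.IsHomogeneous (n - D) ∧ b.IsHomogeneous (n - D) ∧
      h = a * f₀ + b * f₁ := by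
  obtain ⟨u, v, huv⟩ := Ideal.mem_span_pair.mp hmem
  refine ⟨homogeneousComponent (n - D) u, homogeneousComponent (n - D) v,
    homogeneousComponent_isHomogeneous _ _, homogeneousComponent_isHomogeneous _ _, ?_⟩
  have : h = homogeneousComponent n (u * f₀) + homogeneousComponent n (v * f₁) := by
    rw [← map_add, huv, hom_eq_self hh]
  rw [HC_mul hf₀, HC_mul hf₁, if_pos hle, if_pos hle] at this
  exact this

lemma mono_homog (i j : ℕ) : (X 0 ^ i * X 1 ^ j : MvPolynomial (Fin 2) ℂ).IsHomogeneous (i + j) := by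
  have h0 : (X 0 ^ i : MvPolynomial (Fin 2) ℂ).IsHomogeneous i := by
    simpa using (isHomogeneous_X ℂ (0 : Fin 2)).pow i
  have h1 : (X 1 ^ j : MvPolynomial (Fin 2) ℂ).IsHomogeneous j := by
    simpa using (isHomogeneous_X ℂ (1 : Fin 2)).pow j
  exact h0.mul h1

lemma step {f₀ f₁ h : MvPolynomial (Fin 2) ℂ} {D e : ℕ}
    (hf₀ : f₀.IsHomogeneous D) (hf₁ : f₁.IsHomogeneous D)
    (hrel : IsRelPrime f₀ f₁) (hf₁0 : f₁ ≠ 0) (hh : h.IsHomogeneous e) (i j : ℕ)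
    (hcond : e + (i + j) + 3 ≤ 2 * D)
    (H0 : h * (X 0 ^ (i+1) * X 1 ^ j) ∈ Ideal.span {f₀, f₁})
    (H1 : h * (X 0 ^ i * X 1 ^ (j+1)) ∈ Ideal.span {f₀, f₁}) :
    h * (X 0 ^ i * X 1 ^ j) ∈ Ideal.span {f₀, f₁} := by
  set n := e + (i + j) + 1 with hn
  have hhm0 : (h * (X 0 ^ (i+1) * X 1 ^ j)).IsHomogeneous n := by
    have := hh.mul (mono_homog (i+1) j)
    have heq : e + (i + 1 + j) = n := by omega
    exact heq ▸ this
  have hhm1 : (h * (X 0 ^ i * X 1 ^ (j+1))).IsHomogeneous n := by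
    have := hh.mul (mono_homog i (j+1))
    have heq : e + (i + (j + 1)) = n := by omega
    exact heq ▸ this
  by_cases hD : n < D
  · have h0 := hom_rep_lt hf₀ hf₁ hhm0 H0 hD
    have hmono : (X 0 ^ (i+1) * X 1 ^ j : MvPolynomial (Fin 2) ℂ) ≠ 0 :=
      mul_ne_zero (pow_ne_zero _ ((prime_X_fin2 0).ne_zero)) (pow_ne_zero _ ((prime_X_fin2 1).ne_zero))
    have hz : h = 0 := (mul_eq_zero.mp h0).resolve_right hmono
    rw [hz, zero_mul]
    exact Ideal.zero_mem _
  · push_neg at hD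
    obtain ⟨a, b, ha_hom, hb_hom, hab⟩ := hom_rep hf₀ hf₁ hhm0 H0 hD
    obtain ⟨a', b', ha'_hom, hb'_hom, hab'⟩ := hom_rep hf₀ hf₁ hhm1 H1 hD
    have syz : (X 1 * a - X 0 * a') * f₀ = (X 0 * b' - X 1 * b) * f₁ := by
      have e1 : X 1 * (h * (X 0 ^ (i+1) * X 1 ^ j)) = X 0 * (h * (X 0 ^ i * X 1 ^ (j+1))) := by
        ring
      rw [hab, hab'] at e1
      linear_combination e1
  -- vanishing of the syzygy
    have hdvd : f₁ ∣ (X 1 * a - X 0 * a') := by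
      apply hrel.symm.dvd_of_dvd_mul_right
      exact ⟨X 0 * b' - X 1 * b, by rw [syz]; ring⟩
    have hw_hom : (X 1 * a - X 0 * a').IsHomogeneous (n - D + 1) := by
      have h1 : (X 1 * a : MvPolynomial (Fin 2) ℂ).IsHomogeneous (1 + (n - D)) :=
        (isHomogeneous_X ℂ (1 : Fin 2)).mul ha_hom
      have h2 : (X 0 * a' : MvPolynomial (Fin 2) ℂ).IsHomogeneous (1 + (n - D)) :=
        (isHomogeneous_X ℂ (0 : Fin 2)).mul ha'_hom
      have heq : 1 + (n - D) = n - D + 1 := by omega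
      exact heq ▸ (h1.sub h2)
    have hw0 : X 1 * a - X 0 * a' = 0 := by
      obtain ⟨t, ht⟩ := hdvd
      have ht2 : X 1 * a - X 0 * a' = t * f₁ := by rw [ht]; ring
      calc X 1 * a - X 0 * a'
          = homogeneousComponent (n - D + 1) (X 1 * a - X 0 * a') := (hom_eq_self hw_hom).symm
        _ = homogeneousComponent (n - D + 1) (t * f₁) := by rw [← ht2]
        _ = 0 := by rw [HC_mul hf₁, if_neg (by omega)]
    have hb0 : X 0 * b' - X 1 * b = 0 := by
      rw [hw0, zero_mul] at syz
      exact (mul_eq_zero.mp syz.symm).resolve_right hf₁0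
    have hXa : X 0 ∣ a := by
      have h4 : X 0 ∣ X 1 * a := ⟨a', by linear_combination hw0⟩
      rcases (prime_X_fin2 0).2.2 _ _ h4 with hc | hc
      · exact absurd hc (by rw [X_dvd_X]; decide)
      · exact hc
    have hXb : X 0 ∣ b := by
      have h4 : X 0 ∣ X 1 * b := ⟨b', by linear_combination -hb0⟩
      rcases (prime_X_fin2 0).2.2 _ _ h4 with hc | hc
      · exact absurd hc (by rw [X_dvd_X]; decide)
      · exact hc
    obtain ⟨α, hα⟩ := hXa
    obtain ⟨β, hβ⟩ := hXb
    have hcancel : X 0 * (h * (X 0 ^ i * X 1 ^ j)) = X 0 * (α * f₀ + β * f₁) := by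
      linear_combination hab + f₀ * hα + f₁ * hβ
    have hfin := mul_left_cancel₀ (prime_X_fin2 0).ne_zero hcancel
    rw [hfin]
    exact Ideal.mem_span_pair.mpr ⟨α, β, rfl⟩

lemma descend {f₀ f₁ h : MvPolynomial (Fin 2) ℂ} {D e d : ℕ}
    (hf₀ : f₀.IsHomogeneous D) (hf₁ : f₁.IsHomogeneous D)
    (hrel : IsRelPrime f₀ f₁) (hf₁0 : f₁ ≠ 0) (hh : h.IsHomogeneous e)
    (hed : e + d + 2 ≤ 2 * D) (hD : e < D)
    (H : ∀ i j : ℕ, i + j = d → h * (X 0 ^ i * X 1 ^ j) ∈ Ideal.span {f₀, f₁}) :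
    h = 0 := by
  have main : ∀ t, t ≤ d → ∀ i j : ℕ, i + j = d - t →
      h * (X 0 ^ i * X 1 ^ j) ∈ Ideal.span {f₀, f₁} := by
    intro t
    induction t with
    | zero => intro _ i j hij; exact H i j (by omega)
    | succ t ih =>
      intro ht i j hij
      refine step hf₀ hf₁ hrel hf₁0 hh i j (by omega) ?_ ?_
      · exact ih (by omega) (i+1) j (by omega)
      · exact ih (by omega) i (j+1) (by omega)
  have h1 := main d le_rfl 0 0 (by omega)
  rw [pow_zero, pow_zero, one_mul, mul_one] at h1
  exact hom_rep_lt hf₀ hf₁ hh h1 hD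


lemma support_single_contra {f : MvPolynomial (Fin 2) ℂ} {d : ℕ} (hd : 2 ≤ d)
    (hsf : Squarefree f) (j : Fin 2)
    (hj : ∀ m ∈ f.support, m = Finsupp.single j d) : False := by
  have hfeq : f = monomial (Finsupp.single j d) (coeff (Finsupp.single j d) f) := by
    ext m
    rw [coeff_monomial]
    split_ifs with hm
    · rw [← hm]
    · by_contra hc
      exact hm ((hj m (MvPolynomial.mem_support_iff.mpr hc)).symm)
  have hdvd : (X j : MvPolynomial (Fin 2) ℂ) * X j ∣ f := by
    have hXX : (X j : MvPolynomial (Fin 2) ℂ) * X j = monomial (Finsupp.single j 2) 1 := by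
      rw [← X_pow_eq_monomial, sq]
    rw [hXX]
    conv_rhs => rw [hfeq]
    apply monomial_dvd_monomial.mpr
    refine ⟨Or.inr ?_, one_dvd _⟩
    rw [Finsupp.single_le_iff, Finsupp.single_apply, if_pos rfl]
    omega
  exact (prime_X_fin2 j).not_unit (hsf _ hdvd)

lemma pderiv_ne_zero {f : MvPolynomial (Fin 2) ℂ} {d : ℕ} (hd : 2 ≤ d)
    (hf : f.IsHomogeneous d) (hsf : Squarefree f) (i : Fin 2) : pderiv i f ≠ 0 := by
  refine Fin.cases ?_ ?_ i
  · intro h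
    apply support_single_contra hd hsf 1
    intro m hm
    have h1 : m 0 = 0 := exp_zero_of_pderiv_eq_zero h hm
    have h2 := hf (MvPolynomial.mem_support_iff.mp hm)
    rw [wt_eq] at h2
    ext x
    refine Fin.cases ?_ ?_ x
    · rw [Finsupp.single_apply, if_neg (by decide)]
      exact h1
    · intro jj
      have hjj : jj = 0 := Subsingleton.elim _ _
      subst hjj
      have hx1 : ((0 : Fin 1).succ : Fin 2) = 1 := rfl
      rw [hx1, Finsupp.single_apply, if_pos rfl]
      omega
  · intro i1 h
    have hi1 : i1 = 0 := Subsingleton.elim _ _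
    subst hi1
    have hx1 : ((0 : Fin 1).succ : Fin 2) = 1 := rfl
    rw [hx1] at h
    apply support_single_contra hd hsf 0
    intro m hm
    have h1 : m 1 = 0 := exp_zero_of_pderiv_eq_zero h hm
    have h2 := hf (MvPolynomial.mem_support_iff.mp hm)
    rw [wt_eq] at h2
    ext x
    refine Fin.cases ?_ ?_ x
    · rw [Finsupp.single_apply, if_pos rfl]
      omega
    · intro jj
      have hjj : jj = 0 := Subsingleton.elim _ _
      subst hjj
      have hx2 : ((0 : Fin 1).succ : Fin 2) = 1 := rfl
      rw [hx2, Finsupp.single_apply, if_neg (by decide)]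
      exact h1

lemma Skey {d : ℕ} (hd : 4 ≤ d) {f : MvPolynomial (Fin 2) ℂ}
    (hf : f.IsHomogeneous d) (hsf : Squarefree f)
    {e : ℕ} (he : e ≤ d - 4) {h : MvPolynomial (Fin 2) ℂ} (hh : h.IsHomogeneous e)
    (H : ∀ i j : ℕ, i + j = d →
      h * (X 0 ^ i * X 1 ^ j) ∈ Ideal.span {pderiv 0 f, pderiv 1 f}) :
    h = 0 := by
  have hf₀ : (pderiv 0 f).IsHomogeneous (d - 1) := pderiv_isHomogeneous 0 hf
  have hf₁ : (pderiv 1 f).IsHomogeneous (d - 1) := pderiv_isHomogeneous 1 hf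
  have hrel := relPrime_pderivs (by omega) hf hsf
  have hf₁0 : pderiv 1 f ≠ 0 := pderiv_ne_zero (by omega) hf hsf 1
  exact descend hf₀ hf₁ hrel hf₁0 hh (by omega) (by omega) H

lemma pderiv_zero_embS (q : MvPolynomial (Fin 2) ℂ) : pderiv 0 (embS q) = 0 := by
  apply pderiv_eq_zero_of_notMem_vars
  intro hmem
  obtain ⟨x, hx, hx2⟩ := mem_vars_rename _ _ hmem
  exact Fin.succ_ne_zero x hx2

lemma genY (d : ℕ) (f : MvPolynomial (Fin 2) ℂ) :
    pderiv 0 (bigF d f) = (d : MvPolynomial (Fin 3) ℂ) * X 0 ^ (d - 1) := by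
  unfold bigF
  rw [map_sub, pderiv_zero_embS, sub_zero, pderiv_pow, pderiv_X_self, mul_one]

lemma gen1 (d : ℕ) (f : MvPolynomial (Fin 2) ℂ) :
    pderiv 1 (bigF d f) = - embS (pderiv 0 f) := by
  unfold bigF
  rw [map_sub, pderiv_pow, pderiv_X_of_ne (by decide : (0 : Fin 3) ≠ 1), mul_zero, zero_sub]
  congr 1
  show pderiv 1 (rename Fin.succ f) = rename Fin.succ (pderiv 0 f)
  have h := pderiv_rename (Fin.succ_injective 2) 0 f
  rwa [show (Fin.succ 0 : Fin 3) = 1 from rfl] at h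

lemma gen2 (d : ℕ) (f : MvPolynomial (Fin 2) ℂ) :
    pderiv 2 (bigF d f) = - embS (pderiv 1 f) := by
  unfold bigF
  rw [map_sub, pderiv_pow, pderiv_X_of_ne (by decide : (0 : Fin 3) ≠ 2), mul_zero, zero_sub]
  congr 1
  show pderiv 2 (rename Fin.succ f) = rename Fin.succ (pderiv 1 f)
  have h := pderiv_rename (Fin.succ_injective 2) 1 f
  rwa [show (Fin.succ 1 : Fin 3) = 2 from rfl] at h

lemma psi_embS (q : MvPolynomial (Fin 2) ℂ) :
    finSuccEquiv ℂ 2 (embS q) = Polynomial.C q := by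
  induction q using MvPolynomial.induction_on with
  | C a =>
    show finSuccEquiv ℂ 2 (rename Fin.succ (C a)) = _
    rw [rename_C]
    simp [finSuccEquiv_apply]
  | add p q hp hq => rw [map_add, map_add, hp, hq, map_add]
  | mul_X p i hp =>
    have hX : embS (p * X i) = embS p * X i.succ := by
      show rename Fin.succ (p * X i) = rename Fin.succ p * X i.succ
      rw [map_mul, rename_X]
    rw [hX, map_mul, hp, finSuccEquiv_X_succ, ← Polynomial.C_mul]

end Stmt12Aux

open Stmt12Aux

/-- Let `f ∈ ℂ[X₀,X₁]` be homogeneous of degree `d ≥ 4` and squarefree, and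
`F = Y^d − f(X₀,X₁)`.  If `P ∈ ℂ[Y,X₀,X₁]` is homogeneous of degree `d−4` and `u·P ∈ J_F`
for every homogeneous `u ∈ ℂ[X₀,X₁]` of degree `d`, then `P = 0`. -/
theorem stmt12 (d : ℕ) (hd : 4 ≤ d) (f : MvPolynomial (Fin 2) ℂ)
    (hf : f.IsHomogeneous d) (hsf : Squarefree f)
    (P : MvPolynomial (Fin 3) ℂ) (hP : P.IsHomogeneous (d - 4))
    (hann : ∀ u : MvPolynomial (Fin 2) ℂ, u.IsHomogeneous d → embS u * P ∈ jacIdealT d f) :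
    P = 0 := by
  have key : ∀ i : ℕ, ((finSuccEquiv ℂ 2 P).coeff i) = 0 := by
    intro i
    by_cases hi : d - 4 < i
    · by_contra hne
      have h1 := totalDegree_coeff_finSuccEquiv_add_le P i hne
      have h2 : P.totalDegree ≤ d - 4 := hP.totalDegree_le
      omega
    · push_neg at hi
      have hhom : ((finSuccEquiv ℂ 2 P).coeff i).IsHomogeneous (d - 4 - i) :=
        hP.finSuccEquiv_coeff_isHomogeneous i (d - 4 - i) (by omega)
      refine Skey hd hf hsf (by omega : d - 4 - i ≤ d - 4) hhom ?_
      intro a b hab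
      have hu : ((X 0 ^ a * X 1 ^ b : MvPolynomial (Fin 2) ℂ)).IsHomogeneous d :=
        hab ▸ mono_homog a b
      have hmem := hann _ hu
      rw [jacIdealT] at hmem
      obtain ⟨α, z, hz, hxz⟩ := Ideal.mem_span_insert.mp hmem
      obtain ⟨β, γ, hβγ⟩ := Ideal.mem_span_pair.mp hz
      rw [← hβγ] at hxz
      rw [genY, gen1, gen2] at hxz
      set ψ := finSuccEquiv ℂ 2 with hψdef
      have hY : (ψ (α * ((d : MvPolynomial (Fin 3) ℂ) * X 0 ^ (d - 1)))).coeff i = 0 := by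
        rw [map_mul, map_mul, map_pow, finSuccEquiv_X_zero, map_natCast, ← mul_assoc,
          Polynomial.coeff_mul_X_pow', if_neg (by omega : ¬ (d - 1 ≤ i))]
      have hB : (ψ (β * -embS (pderiv 0 f))).coeff i
          = -((ψ β).coeff i * pderiv 0 f) := by
        rw [map_mul, map_neg, psi_embS, ← Polynomial.C_neg, Polynomial.coeff_mul_C]
        ring
      have hC : (ψ (γ * -embS (pderiv 1 f))).coeff i
          = -((ψ γ).coeff i * pderiv 1 f) := by
        rw [map_mul, map_neg, psi_embS, ← Polynomial.C_neg, Polynomial.coeff_mul_C]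
        ring
      have hco : (X 0 ^ a * X 1 ^ b : MvPolynomial (Fin 2) ℂ) * (ψ P).coeff i
          = 0 + (-((ψ β).coeff i * pderiv 0 f) + -((ψ γ).coeff i * pderiv 1 f)) := by
        calc (X 0 ^ a * X 1 ^ b : MvPolynomial (Fin 2) ℂ) * (ψ P).coeff i
            = (ψ (embS (X 0 ^ a * X 1 ^ b) * P)).coeff i := by
              rw [map_mul, psi_embS, Polynomial.coeff_C_mul]
          _ = 0 + (-((ψ β).coeff i * pderiv 0 f) + -((ψ γ).coeff i * pderiv 1 f)) := by
              rw [hxz, map_add, map_add, Polynomial.coeff_add, Polynomial.coeff_add, hY, hB, hC]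
      refine Ideal.mem_span_pair.mpr ⟨-((ψ β).coeff i), -((ψ γ).coeff i), ?_⟩
      linear_combination -hco
  have hzero : finSuccEquiv ℂ 2 P = 0 := Polynomial.ext fun i => by
    rw [key i, Polynomial.coeff_zero]
  have h2 := congrArg (finSuccEquiv ℂ 2).symm hzero
  simpa using h2
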